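/- Let φ : [0,∞) → ℝ be a bounded, strictly increasing C² solution of d1 φ'' - c φ' + f(x) = 0 on (0,∞) with d1, c > 0, where f(x) = O(e^{-βx}) for some β > 0 and f ≥ 0. If additionally u* - φ(x) = O(e^{-βx}) for the limit u* = lim_{x→∞} φ(x), then u* - φ(x) + φ'(x) = O(e^{-αx}) for some α > 0 depending only on d1, c, β. -/

import Mathlib

/-- Exponential decay of `u* - φ` and `φ'` for a bounded, strictly increasing solution of
`d1 φ'' - c φ' + f = 0` with exponentially decaying source. -/
theorem stmt1 (d1 c β ustar : ℝ) (φ φ' φ'' f : ℝ → ℝ)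
    (hd1 : 0 < d1) (hc : 0 < c) (hβ : 0 < β)
    (hφd : ∀ x, 0 ≤ x → HasDerivAt φ (φ' x) x)
    (hφd2 : ∀ x, 0 ≤ x → HasDerivAt φ' (φ'' x) x)
    (hmono : StrictMonoOn φ (Set.Ici 0))
    (hbdd : ∃ B, ∀ x, 0 ≤ x → |φ x| ≤ B)
    (hode : ∀ x, 0 < x → d1 * φ'' x - c * φ' x + f x = 0)
    (hf : ∃ C > 0, ∀ x, 0 ≤ x → 0 ≤ f x ∧ f x ≤ C * Real.exp (-β * x))
    (hlim : Filter.Tendsto φ Filter.atTop (nhds ustar))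
    (hconv : ∃ C > 0, ∀ x, 0 ≤ x → ustar - φ x ≤ C * Real.exp (-β * x)) :
    ∃ α > 0, ∃ C' > 0, ∀ x, 0 ≤ x →
      ustar - φ x + φ' x ≤ C' * Real.exp (-α * x) := by
  obtain ⟨C, hC, hfC⟩ := hf
  obtain ⟨C₂, hC₂, hconvC⟩ := hconv
  -- φ ≤ ustar on [0, ∞)
  have hφle : ∀ x, 0 ≤ x → φ x ≤ ustar := by
    intro x hx
    refine ge_of_tendsto hlim ?_
    filter_upwards [Filter.eventually_ge_atTop x] with y hy
    exact hmono.monotoneOn (Set.mem_Ici.mpr hx) (Set.mem_Ici.mpr (hx.trans hy)) hy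
  -- the comparison function k
  set k : ℝ → ℝ := fun t => d1 * φ' t - c * φ t + (C / β) * (1 - Real.exp (-β * t)) with hk
  have hkd : ∀ t, 0 ≤ t →
      HasDerivAt k (d1 * φ'' t - c * φ' t + C * Real.exp (-β * t)) t := by
    intro t ht
    have h1 := (hφd2 t ht).const_mul d1
    have h2 := (hφd t ht).const_mul c
    have hexp : HasDerivAt (fun s : ℝ => Real.exp (-β * s))
        (Real.exp (-β * t) * (-β * 1)) t :=
      (Real.hasDerivAt_exp (-β * t)).comp t ((hasDerivAt_id t).const_mul (-β))
    have h3 : HasDerivAt (fun s : ℝ => (C / β) * (1 - Real.exp (-β * s)))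
        ((C / β) * (0 - Real.exp (-β * t) * (-β * 1))) t :=
      ((hasDerivAt_const t (1:ℝ)).sub hexp).const_mul (C / β)
    have h := (h1.sub h2).add h3
    refine h.congr_deriv ?_
    have hβ' : β ≠ 0 := hβ.ne'
    field_simp <;> ring
  have hkmono : MonotoneOn k (Set.Ici (0:ℝ)) := by
    apply monotoneOn_of_deriv_nonneg (convex_Ici 0)
    · intro t ht
      exact (hkd t ht).continuousAt.continuousWithinAt
    · intro t ht
      rw [interior_Ici] at ht
      exact (hkd t (le_of_lt ht)).differentiableAt.differentiableWithinAt
    · intro t ht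
      rw [interior_Ici] at ht
      rw [(hkd t ht.le).deriv]
      have h0 := hode t ht
      have h1 := (hfC t ht.le).2
      linarith
  refine ⟨β, hβ, 2 * C₂ + C / (β * d1), by positivity, ?_⟩
  intro x hx
  set n : ℕ := ⌈x⌉₊ with hn
  have hxn : x ≤ (n : ℝ) := Nat.le_ceil x
  have hn0 : (0:ℝ) ≤ (n : ℝ) := hx.trans hxn
  have hlt : (n : ℝ) < (n : ℝ) + 1 := by linarith
  obtain ⟨y, hy, hyval⟩ := exists_hasDerivAt_eq_slope φ φ' hlt
    (fun t ht => (hφd t (hn0.trans ht.1)).continuousAt.continuousWithinAt)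
    (fun t ht => hφd t (hn0.trans ht.1.le))
  have hyx : x ≤ y := hxn.trans hy.1.le
  have hy0 : 0 ≤ y := hn0.trans hy.1.le
  have hslope : φ' y = φ ((n:ℝ) + 1) - φ (n:ℝ) := by
    rw [hyval]; field_simp; ring
  have hk1 : k x ≤ k y := hkmono (Set.mem_Ici.mpr hx) (Set.mem_Ici.mpr hy0) hyx
  have hE : Real.exp (-β * (n:ℝ)) ≤ Real.exp (-β * x) := by
    apply Real.exp_le_exp.mpr; nlinarith
  have hφy : φ' y ≤ C₂ * Real.exp (-β * x) := by
    rw [hslope]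
    have h1 := hφle ((n:ℝ) + 1) (by linarith)
    have h2 := hconvC (n:ℝ) hn0
    have h3 := mul_le_mul_of_nonneg_left hE hC₂.le
    linarith
  have hxy' : φ x ≤ φ y := hmono.monotoneOn (Set.mem_Ici.mpr hx) (Set.mem_Ici.mpr hy0) hyx
  have hEy : (0:ℝ) < Real.exp (-β * y) := Real.exp_pos _
  have hid : d1 * (C / (β * d1)) = C / β := by field_simp
  have hcx := hconvC x hx
  have key : d1 * (ustar - φ x + φ' x) ≤
      d1 * ((2 * C₂ + C / (β * d1)) * Real.exp (-β * x)) := by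
    simp only [hk] at hk1
    have h4 := mul_le_mul_of_nonneg_left hφy hd1.le
    have h5 := mul_le_mul_of_nonneg_left hcx hd1.le
    have h6 : (0:ℝ) ≤ (C / β) * Real.exp (-β * y) := by positivity
    have h7 : (0:ℝ) ≤ c * (φ y - φ x) := mul_nonneg hc.le (sub_nonneg.mpr hxy')
    have hid' : d1 * (C / (β * d1)) * Real.exp (-β * x) = (C / β) * Real.exp (-β * x) := by
      rw [hid]
    nlinarith [hid']
  exact le_of_mul_le_mul_left key hd1
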